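/- arXiv:1906.03748 — 2 statements merged into one kernel-verified Lean document; each statement's English description precedes it below -/
import Mathlib

section
/- Let H be a graph and c, d positive integers such that χ(K_c^H) ≥ c + 1. Then every proper colouring φ of the exponential graph K_{cd}^H with x colours induces a graph homomorphism ψ from the Kneser graph K(cd, c) to the Kneser graph K(x, c+1), where for each c-subset A of {1,…,cd}, ψ(A) is a set of exactly c+1 colours used by φ on the subgraph of K_{cd}^H induced by the functions with image contained in A. -/
open SimpleGraph

/-- The categorical (tensor) product of two simple graphs. -/
def tensorProd {V W : Type*} (G : SimpleGraph V) (H : SimpleGraph W) :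
    SimpleGraph (V × W) where
  Adj a b := G.Adj a.1 b.1 ∧ H.Adj a.2 b.2
  symm := ⟨fun a b h => ⟨h.1.symm, h.2.symm⟩⟩
  loopless := ⟨fun a h => G.ne_of_adj h.1 rfl⟩

/-- The exponential graph `K_c^H`: vertices are functions `V(H) → Fin c`,
two distinct functions `f, g` are adjacent iff `f u ≠ g v` for every edge `uv` of `H`. -/
def expGraph {V : Type*} (H : SimpleGraph V) (c : ℕ) : SimpleGraph (V → Fin c) where
  Adj f g := f ≠ g ∧ ∀ u v, H.Adj u v → f u ≠ g v
  symm := ⟨fun f g h => ⟨h.1.symm, fun u v huv => (h.2 v u huv.symm).symm⟩⟩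
  loopless := ⟨fun f h => h.1 rfl⟩

/-- The Kneser graph `K(m, n)`: vertices are the `n`-element subsets of an `m`-element set,
two distinct such subsets being adjacent iff they are disjoint. -/
def kneser (m n : ℕ) : SimpleGraph {A : Finset (Fin m) // A.card = n} where
  Adj A B := A ≠ B ∧ Disjoint A.1 B.1
  symm := ⟨fun A B h => ⟨h.1.symm, h.2.symm⟩⟩
  loopless := ⟨fun A h => h.1 rfl⟩

/-- The `n`-th multichromatic number of a graph: the least `m` such that the graph
admits a homomorphism to the Kneser graph `K(m, n)`. -/
noncomputable def multichromatic {V : Type*} (H : SimpleGraph V) (n : ℕ) : ℕ :=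
  sInf {m : ℕ | Nonempty (H →g kneser m n)}

/-- The Poljak–Rödl function `f(n) = min {χ(G × H) : χ(G) ≥ n, χ(H) ≥ n}`. -/
noncomputable def poljakRodl (n : ℕ) : ℕ :=
  sInf {k : ℕ | ∃ (p q : ℕ) (G : SimpleGraph (Fin p)) (H : SimpleGraph (Fin q)),
    (n : ℕ∞) ≤ G.chromaticNumber ∧ (n : ℕ∞) ≤ H.chromaticNumber ∧
    (tensorProd G H).chromaticNumber = (k : ℕ∞)}

/-- The lexicographic product `G[H]`. -/
def lexProd {V W : Type*} (G : SimpleGraph V) (H : SimpleGraph W) :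
    SimpleGraph (V × W) where
  Adj a b := G.Adj a.1 b.1 ∨ (a.1 = b.1 ∧ H.Adj a.2 b.2)
  symm := ⟨fun a b h => by
    rcases h with h | ⟨h1, h2⟩
    · exact Or.inl h.symm
    · exact Or.inr ⟨h1.symm, h2.symm⟩⟩
  loopless := ⟨fun a h => by
    rcases h with h | ⟨_, h2⟩
    · exact G.ne_of_adj h rfl
    · exact H.ne_of_adj h2 rfl⟩

/-- If `χ(K_c^H) ≥ c + 1`, then every proper colouring `φ` of `K_{cd}^H` with `x` colours
induces a graph homomorphism `ψ : K(cd, c) →g K(x, c+1)` such that, for each `c`-subset `A`,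
every colour in `ψ(A)` is used by `φ` on some function with image contained in `A`. -/
theorem coloring_expGraph_induces_kneser_hom {V : Type*} [Fintype V] (H : SimpleGraph V)
    (c d x : ℕ) (hc : 0 < c) (hd : 0 < d)
    (hchi : ((c + 1 : ℕ) : ℕ∞) ≤ (expGraph H c).chromaticNumber)
    (phi : (expGraph H (c * d)).Coloring (Fin x)) :
    ∃ psi : kneser (c * d) c →g kneser x (c + 1),
      ∀ (A : {A : Finset (Fin (c * d)) // A.card = c}) (col : Fin x),
        col ∈ (psi A).1 → ∃ f : V → Fin (c * d), (∀ v, f v ∈ A.1) ∧ phi f = col := by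
  
  classical
  have hV : Nonempty V := by
    by_contra hne
    have hcol : (expGraph H c).Colorable 1 :=
      ⟨⟨fun _ => 0, fun {f g} hadj => absurd (funext fun v => (hne ⟨v⟩).elim) hadj.1⟩⟩
    have h1 := hcol.chromaticNumber_le
    have := le_trans hchi h1
    have : c + 1 ≤ 1 := by exact_mod_cast this
    omega
  -- the set of colours used on functions with image in A
  set S : {A : Finset (Fin (c * d)) // A.card = c} → Finset (Fin x) := fun A =>
    Finset.univ.filter (fun col => ∃ f : V → Fin (c * d), (∀ v, f v ∈ A.1) ∧ phi f = col)
    with hS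
  have hmemS : ∀ A col, col ∈ S A ↔ ∃ f : V → Fin (c * d), (∀ v, f v ∈ A.1) ∧ phi f = col := by
    intro A col
    simp [hS]
  have hcard : ∀ A, c + 1 ≤ (S A).card := by
    intro A
    have e : {y // y ∈ A.1} ≃ Fin c := A.1.equivFinOfCardEq A.2
    let lift : (V → Fin c) → (V → Fin (c * d)) := fun f v => (e.symm (f v) : Fin (c * d))
    have hliftmem : ∀ f v, lift f v ∈ A.1 := fun f v => (e.symm (f v)).2
    have hliftval : ∀ (f g : V → Fin c) (u v : V), lift f u = lift g v → f u = g v := by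
      intro f g u v h
      have := e.symm.injective (Subtype.coe_injective h)
      exact this
    have C : (expGraph H c).Coloring (S A) := by
      refine Coloring.mk (fun f => ⟨phi (lift f), (hmemS A _).2 ⟨lift f, hliftmem f, rfl⟩⟩) ?_
      intro f g hadj hEq
      have hEq' : phi (lift f) = phi (lift g) := congrArg Subtype.val hEq
      have hadj' : (expGraph H (c * d)).Adj (lift f) (lift g) := by
        refine ⟨?_, ?_⟩
        · intro h
          exact hadj.1 (funext fun v => hliftval f g v v (congrFun h v))
        · intro u v huv h
          exact hadj.2 u v huv (hliftval f g u v h)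
      exact phi.valid hadj' hEq'
    have hcol : (expGraph H c).Colorable (S A).card := by
      have := C.colorable
      rwa [Fintype.card_coe] at this
    have := le_trans hchi hcol.chromaticNumber_le
    exact_mod_cast this
  have hdisj : ∀ A B, Disjoint A.1 B.1 → Disjoint (S A) (S B) := by
    intro A B hAB
    rw [Finset.disjoint_left]
    intro col hA hB
    obtain ⟨f, hf, hfc⟩ := (hmemS A col).1 hA
    obtain ⟨g, hg, hgc⟩ := (hmemS B col).1 hB
    have hne : ∀ u v : V, f u ≠ g v := fun u v h =>
      Finset.disjoint_left.1 hAB (hf u) (h ▸ hg v)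
    have hadj : (expGraph H (c * d)).Adj f g := by
      refine ⟨?_, fun u v _ => hne u v⟩
      obtain ⟨v⟩ := hV
      intro h
      exact hne v v (congrFun h v)
    exact phi.valid hadj (hfc.trans hgc.symm)
  choose T hT1 hT2 using fun A => Finset.exists_subset_card_eq (hcard A)
  refine ⟨⟨fun A => ⟨T A, hT2 A⟩, ?_⟩, ?_⟩
  · intro A B hadj
    have hd' : Disjoint (T A) (T B) :=
      Finset.disjoint_of_subset_left (hT1 A) (Finset.disjoint_of_subset_right (hT1 B)
        (hdisj A B hadj.2))
    refine ⟨?_, hd'⟩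
    intro h
    have h' : T A = T B := congrArg Subtype.val h
    have : (T A).card = 0 :=
      Finset.card_eq_zero.mpr ((Finset.disjoint_self_iff_empty (T A)).1 (h' ▸ hd'))
    rw [hT2 A] at this
    omega
  · intro A col hcol
    exact (hmemS A col).1 (hT1 A hcol)
end

section
/- Let c, d be positive integers and let H be a graph with χ(K_c^H) ≥ c + 1 and χ(H) ≥ 2cd. Then for every integer i with 0 ≤ i ≤ (c−1)d, there exist graphs G' and H' with χ(G') ≥ cd + d + i and χ(H') ≥ cd + d + i and χ(G' × H') ≤ cd + i; consequently the Poljak–Rödl function satisfies f(cd + d + i) ≤ cd + i. -/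
open SimpleGraph

/-- Values in different blocks of size `c` are distinct. -/
private lemma block_ne_block {c : ℕ} {j j' a b : ℕ} (ha : a < c) (hb : b < c)
    (hjj : j ≠ j') : j * c + a ≠ j' * c + b := by
  rcases Nat.lt_or_ge j j' with h | h
  · have h1 : (j + 1) * c ≤ j' * c := Nat.mul_le_mul_right c (Nat.succ_le_of_lt h)
    have h2 : (j + 1) * c = j * c + c := Nat.succ_mul j c
    omega
  · have hlt : j' < j := lt_of_le_of_ne h (Ne.symm hjj)
    have h1 : (j' + 1) * c ≤ j * c := Nat.mul_le_mul_right c (Nat.succ_le_of_lt hlt)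
    have h2 : (j' + 1) * c = j' * c + c := Nat.succ_mul j' c
    omega

/-- The key combinatorial lemma: the exponential graph `K_{cd+i}^H` contains the join of
`d` disjoint copies of `K_c^H` together with `i` further universal vertices, hence any
proper coloring of it uses at least `d(c+1)+i` colors, provided `K_c^H` is not
`c`-colorable. -/
private lemma expGraph_coloring_lower {V : Type*} [Fintype V] (H : SimpleGraph V)
    [Nonempty V] (c d i N : ℕ) (hc : 0 < c)
    (hcol : ¬ (expGraph H c).Colorable c)
    (C : (expGraph H (c * d + i)).Coloring (Fin N)) :
    d * (c + 1) + i ≤ N := by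
  classical
  -- block embeddings
  have hblock : ∀ (j : Fin d) (x : Fin c), j.1 * c + x.1 < c * d := by
    intro j x
    have h1 : (j.1 + 1) * c ≤ d * c := Nat.mul_le_mul_right c (Nat.succ_le_of_lt j.2)
    have h2 : (j.1 + 1) * c = j.1 * c + c := Nat.succ_mul j.1 c
    have h3 : d * c = c * d := Nat.mul_comm d c
    have := x.2
    omega
  let g : Fin d → (V → Fin c) → (V → Fin (c * d + i)) :=
    fun j f v => ⟨j.1 * c + (f v).1, by have := hblock j (f v); omega⟩
  -- adjacency facts
  have adj1 : ∀ (j : Fin d) (f f' : V → Fin c), (expGraph H c).Adj f f' →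
      (expGraph H (c * d + i)).Adj (g j f) (g j f') := by
    intro j f f' ⟨hne, hcond⟩
    constructor
    · intro hEq
      apply hne
      funext v
      have := congrFun hEq v
      have hval : j.1 * c + (f v).1 = j.1 * c + (f' v).1 := congrArg Fin.val this
      exact Fin.ext (by omega)
    · intro u v huv hEq
      have hval : j.1 * c + (f u).1 = j.1 * c + (f' v).1 := congrArg Fin.val hEq
      exact hcond u v huv (Fin.ext (by omega))
  have adj2 : ∀ (j j' : Fin d) (f f' : V → Fin c), j ≠ j' →
      (expGraph H (c * d + i)).Adj (g j f) (g j' f') := by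
    intro j j' f f' hjj
    have hvals : ∀ u v : V, (g j f) u ≠ (g j' f') v := by
      intro u v hEq
      exact block_ne_block (f u).2 (f' v).2 (fun h => hjj (Fin.ext h))
        (congrArg Fin.val hEq)
    refine ⟨?_, fun u v _ => hvals u v⟩
    intro hEq
    obtain ⟨v⟩ := ‹Nonempty V›
    exact hvals v v (congrFun hEq v)
  -- constants using the top `i` colors
  let k : Fin i → (V → Fin (c * d + i)) :=
    fun t _ => ⟨c * d + t.1, by have := t.2; omega⟩
  have adjk : ∀ (t t' : Fin i), t ≠ t' →
      (expGraph H (c * d + i)).Adj (k t) (k t') := by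
    intro t t' htt
    have hvals : ∀ u v : V, (k t) u ≠ (k t') v := by
      intro u v hEq
      have := congrArg Fin.val hEq
      simp only [k] at this
      exact htt (Fin.ext (by omega))
    refine ⟨?_, fun u v _ => hvals u v⟩
    intro hEq
    obtain ⟨v⟩ := ‹Nonempty V›
    exact hvals v v (congrFun hEq v)
  have adjkg : ∀ (t : Fin i) (j : Fin d) (f : V → Fin c),
      (expGraph H (c * d + i)).Adj (k t) (g j f) := by
    intro t j f
    have hvals : ∀ u v : V, (k t) u ≠ (g j f) v := by
      intro u v hEq
      have hval := congrArg Fin.val hEq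
      have hgv : ((g j f) v).1 = j.1 * c + (f v).1 := rfl
      have hkv : ((k t) u).1 = c * d + t.1 := rfl
      have := hblock j (f v)
      have h2 := t.2
      omega
    refine ⟨?_, fun u v _ => hvals u v⟩
    intro hEq
    obtain ⟨v⟩ := ‹Nonempty V›
    exact hvals v v (congrFun hEq v)
  -- color sets
  let S : Fin d → Finset (Fin N) :=
    fun j => Finset.image (fun f => C (g j f)) Finset.univ
  let T : Finset (Fin N) := Finset.image (fun t => C (k t)) Finset.univ
  -- each S j has at least c+1 colors
  have hScard : ∀ j : Fin d, c + 1 ≤ (S j).card := by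
    intro j
    by_contra hlt
    push_neg at hlt
    have hle : (S j).card ≤ c := by omega
    have hmem : ∀ f : V → Fin c, C (g j f) ∈ S j := by
      intro f
      exact Finset.mem_image_of_mem _ (Finset.mem_univ f)
    let C' : (expGraph H c).Coloring (S j) :=
      Coloring.mk (fun f => ⟨C (g j f), hmem f⟩)
        (by
          intro f f' hadj hEq
          exact C.valid (adj1 j f f' hadj) (congrArg Subtype.val hEq))
    have hcolorable : (expGraph H c).Colorable (Fintype.card (S j)) := C'.colorable
    rw [Fintype.card_coe] at hcolorable
    exact hcol (hcolorable.mono hle)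
  -- the S j are pairwise disjoint
  have hSdisj : ∀ j j' : Fin d, j ≠ j' → Disjoint (S j) (S j') := by
    intro j j' hjj
    rw [Finset.disjoint_left]
    intro x hx hx'
    obtain ⟨f, _, hf⟩ := Finset.mem_image.mp hx
    obtain ⟨f', _, hf'⟩ := Finset.mem_image.mp hx'
    exact C.valid (adj2 j j' f f' hjj) (hf.trans hf'.symm)
  -- T has i colors
  have hTcard : T.card = i := by
    have hinj : Function.Injective (fun t : Fin i => C (k t)) := by
      intro t t' hEq
      by_contra htt
      exact C.valid (adjk t t' htt) hEq
    rw [Finset.card_image_of_injective _ hinj, Finset.card_univ, Fintype.card_fin]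
  -- T is disjoint from the union of the S j
  have hTdisj : Disjoint (Finset.univ.biUnion S) T := by
    rw [Finset.disjoint_left]
    intro x hx hx'
    obtain ⟨j, _, hj⟩ := Finset.mem_biUnion.mp hx
    obtain ⟨f, _, hf⟩ := Finset.mem_image.mp hj
    obtain ⟨t, _, ht⟩ := Finset.mem_image.mp hx'
    exact C.valid (adjkg t j f) (ht.trans hf.symm)
  -- counting
  have hbU : (Finset.univ.biUnion S).card = ∑ j : Fin d, (S j).card :=
    Finset.card_biUnion (fun j _ j' _ hjj => hSdisj j j' hjj)
  have hsum : d * (c + 1) ≤ ∑ j : Fin d, (S j).card := by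
    calc d * (c + 1) = (Finset.univ : Finset (Fin d)).card • (c + 1) := by
          simp [Finset.card_univ, smul_eq_mul]
      _ ≤ ∑ j : Fin d, (S j).card :=
          Finset.card_nsmul_le_sum _ _ _ (fun j _ => hScard j)
  have hunion : (Finset.univ.biUnion S ∪ T).card
      = (Finset.univ.biUnion S).card + T.card :=
    Finset.card_union_of_disjoint hTdisj
  have hle : (Finset.univ.biUnion S ∪ T).card ≤ N := by
    calc (Finset.univ.biUnion S ∪ T).card ≤ (Finset.univ : Finset (Fin N)).card :=
          Finset.card_le_univ _
      _ = N := by simp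
  omega

/-- If `χ(K_c^H) ≥ c + 1` and `χ(H) ≥ 2cd`, then for every `i` with `0 ≤ i ≤ (c-1)d`
there are graphs `G'`, `H'` with `χ(G'), χ(H') ≥ cd + d + i` and `χ(G' × H') ≤ cd + i`;
consequently `f(cd + d + i) ≤ cd + i`. -/
theorem poljakRodl_upper_bound_of_expGraph {V : Type*} [Fintype V] (H : SimpleGraph V)
    (c d : ℕ) (hc : 0 < c) (hd : 0 < d)
    (h1 : ((c + 1 : ℕ) : ℕ∞) ≤ (expGraph H c).chromaticNumber)
    (h2 : ((2 * c * d : ℕ) : ℕ∞) ≤ H.chromaticNumber)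
    (i : ℕ) (hi : i ≤ (c - 1) * d) :
    (∃ (p q : ℕ) (G' : SimpleGraph (Fin p)) (H' : SimpleGraph (Fin q)),
      ((c * d + d + i : ℕ) : ℕ∞) ≤ G'.chromaticNumber ∧
      ((c * d + d + i : ℕ) : ℕ∞) ≤ H'.chromaticNumber ∧
      (tensorProd G' H').chromaticNumber ≤ ((c * d + i : ℕ) : ℕ∞)) ∧
    poljakRodl (c * d + d + i) ≤ c * d + i := by
  classical
  -- V is nonempty
  have hVne : Nonempty V := by
    rcases isEmpty_or_nonempty V with hE | hNE
    · exfalso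
      have h0 : H.chromaticNumber = 0 := chromaticNumber_eq_zero_of_isEmpty (G := H)
      rw [h0] at h2
      have : (2 * c * d : ℕ) ≤ 0 := by
        have := h2
        exact_mod_cast this
      have hpos : 0 < 2 * c * d := by positivity
      omega
    · exact hNE
  haveI := hVne
  -- K_c^H is not c-colorable
  have hcol : ¬ (expGraph H c).Colorable c := by
    intro hcc
    have hle : (expGraph H c).chromaticNumber ≤ (c : ℕ∞) := hcc.chromaticNumber_le
    have : ((c + 1 : ℕ) : ℕ∞) ≤ (c : ℕ∞) := le_trans h1 hle
    have : c + 1 ≤ c := by exact_mod_cast this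
    omega
  -- every coloring of K_{cd+i}^H uses at least cd+d+i colors
  have hkey : ∀ n : ℕ, (expGraph H (c * d + i)).Colorable n → c * d + d + i ≤ n := by
    intro n ⟨Cn⟩
    have := expGraph_coloring_lower H c d i n hc hcol Cn
    have hdc : d * (c + 1) = c * d + d := by ring
    omega
  -- arithmetic: cd + d + i ≤ 2cd
  have hcd : (c - 1) * d + d = c * d := by
    have hc1 : c - 1 + 1 = c := Nat.succ_pred_eq_of_pos hc
    calc (c - 1) * d + d = ((c - 1) + 1) * d := by ring
      _ = c * d := by rw [hc1]
  have h2cd : 2 * c * d = c * d + c * d := by ring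
  have harith : c * d + d + i ≤ 2 * c * d := by omega
  -- transfer to graphs on Fin p, Fin q
  let M := c * d + i
  let e := Fintype.equivFin (V → Fin M)
  let eV := Fintype.equivFin V
  let G' : SimpleGraph (Fin (Fintype.card (V → Fin M))) :=
    SimpleGraph.comap (⇑e.symm) (expGraph H M)
  let H' : SimpleGraph (Fin (Fintype.card V)) := SimpleGraph.comap (⇑eV.symm) H
  -- homomorphisms into the transferred graphs
  let φ₁ : expGraph H M →g G' :=
    ⟨⇑e, by intro a b hab; simpa [G', SimpleGraph.comap] using hab⟩
  let φ₂ : H →g H' :=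
    ⟨⇑eV, by intro a b hab; simpa [H', SimpleGraph.comap] using hab⟩
  -- lower bound for χ(G')
  have hG'lower : ((c * d + d + i : ℕ) : ℕ∞) ≤ G'.chromaticNumber := by
    rw [chromaticNumber_eq_biInf]
    refine le_iInf₂ ?_
    intro n hn
    obtain ⟨Cn⟩ := hn
    have : (expGraph H M).Colorable n := ⟨Cn.comp φ₁⟩
    exact Nat.cast_le.mpr (hkey n this)
  -- lower bound for χ(H')
  have hH'lower : ((c * d + d + i : ℕ) : ℕ∞) ≤ H'.chromaticNumber := by
    rw [chromaticNumber_eq_biInf]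
    refine le_iInf₂ ?_
    intro n hn
    obtain ⟨Cn⟩ := hn
    have hHn : H.Colorable n := ⟨Cn.comp φ₂⟩
    have hχ : H.chromaticNumber ≤ (n : ℕ∞) := hHn.chromaticNumber_le
    have : ((2 * c * d : ℕ) : ℕ∞) ≤ (n : ℕ∞) := le_trans h2 hχ
    have h2n : 2 * c * d ≤ n := by exact_mod_cast this
    exact Nat.cast_le.mpr (le_trans harith h2n)
  -- the evaluation coloring of the tensor product
  let CT : (tensorProd G' H').Coloring (Fin M) :=
    Coloring.mk (fun x => (e.symm x.1) (eV.symm x.2))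
      (by
        intro a b hab
        exact hab.1.2 (eV.symm a.2) (eV.symm b.2) hab.2)
  have hTcolor : (tensorProd G' H').Colorable M := ⟨CT⟩
  have hupper : (tensorProd G' H').chromaticNumber ≤ ((c * d + i : ℕ) : ℕ∞) :=
    hTcolor.chromaticNumber_le
  refine ⟨⟨_, _, G', H', hG'lower, hH'lower, hupper⟩, ?_⟩
  -- the Poljak–Rödl bound
  have hcoene : ((c * d + i : ℕ) : ℕ∞) ≠ ⊤ := ENat.coe_ne_top _
  have hne_top : (tensorProd G' H').chromaticNumber ≠ ⊤ :=
    ne_top_of_le_ne_top hcoene hupper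
  have hkeq : (((tensorProd G' H').chromaticNumber.toNat : ℕ) : ℕ∞)
      = (tensorProd G' H').chromaticNumber := ENat.coe_toNat hne_top
  have hmem : (tensorProd G' H').chromaticNumber.toNat ∈
      {k : ℕ | ∃ (p q : ℕ) (G : SimpleGraph (Fin p)) (H : SimpleGraph (Fin q)),
        ((c * d + d + i : ℕ) : ℕ∞) ≤ G.chromaticNumber ∧
        ((c * d + d + i : ℕ) : ℕ∞) ≤ H.chromaticNumber ∧
        (tensorProd G H).chromaticNumber
          = (((tensorProd G' H').chromaticNumber.toNat : ℕ) : ℕ∞)} :=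
    ⟨_, _, G', H', hG'lower, hH'lower, hkeq.symm⟩
  have hsinf : poljakRodl (c * d + d + i) ≤ (tensorProd G' H').chromaticNumber.toNat :=
    Nat.sInf_le hmem
  have hkle : (tensorProd G' H').chromaticNumber.toNat ≤ c * d + i := by
    have h := hkeq.le.trans hupper
    exact_mod_cast h
  exact le_trans hsinf hkle
end
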